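/- Let P be an n×n row-stochastic matrix, λ ∈ (0,1), and v a probability vector. Then the vector π defined by π^T = v^T (1−λ)(Id − λP)^{-1} is the unique vector with π^T G = π^T and ∑_i π_i = 1, where G = λP + (1−λ)e v^T. Moreover if v > 0 componentwise then π > 0 componentwise. -/
import Mathlib

theorem stmt_5 (n : ℕ) (P : Matrix (Fin n) (Fin n) ℝ)
    (hnonneg : ∀ i j, 0 ≤ P i j) (hrow : ∀ i, ∑ j, P i j = 1)
    (l : ℝ) (hl0 : 0 < l) (hl1 : l < 1)
    (v : Fin n → ℝ) (hv : ∀ i, 0 ≤ v i) (hv1 : ∑ i, v i = 1)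
    (G : Matrix (Fin n) (Fin n) ℝ)
    (hG : ∀ i j, G i j = l * P i j + (1 - l) * v j)
    (π : Fin n → ℝ)
    (hπ : π = Matrix.vecMul v ((1 - l) • (1 - l • P)⁻¹)) :
    (Matrix.vecMul π G = π ∧ ∑ i, π i = 1) ∧
    (∀ π' : Fin n → ℝ, Matrix.vecMul π' G = π' → ∑ i, π' i = 1 → π' = π) ∧
    ((∀ i, 0 < v i) → ∀ i, 0 < π i) := by
  set A : Matrix (Fin n) (Fin n) ℝ := 1 - l • P with hA
  -- determinant nonzero
  have hdet : A.det ≠ 0 := by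
    apply det_ne_zero_of_sum_row_lt_diag
    intro k
    have hPk : P k k ≤ 1 := by
      have := Finset.single_le_sum (f := fun j => P k j) (fun j _ => hnonneg k j) (Finset.mem_univ k)
      linarith [hrow k]
    have h1 : ∑ j ∈ Finset.univ.erase k, ‖A k j‖ = l * (1 - P k k) := by
      have h : ∀ j ∈ Finset.univ.erase k, ‖A k j‖ = l * P k j := by
        intro j hj
        have hjk : j ≠ k := Finset.ne_of_mem_erase hj
        simp [hA, Matrix.sub_apply, Matrix.one_apply, (Ne.symm hjk), Real.norm_eq_abs, abs_mul,
          abs_of_nonneg hl0.le, abs_of_nonneg (hnonneg k j)]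
      rw [Finset.sum_congr rfl h, ← Finset.mul_sum]
      congr 1
      have := Finset.sum_erase_add Finset.univ (fun j => P k j) (Finset.mem_univ k)
      rw [hrow k] at this
      linarith
    have h2 : ‖A k k‖ = 1 - l * P k k := by
      have h0 : (0:ℝ) ≤ 1 - l * P k k := by nlinarith [hnonneg k k]
      simp [hA, Matrix.sub_apply, Matrix.one_apply_eq, Real.norm_eq_abs, abs_of_nonneg h0]
    rw [h1, h2]
    nlinarith [hnonneg k k]
  have hunit : IsUnit A.det := isUnit_iff_ne_zero.mpr hdet
  -- π * A = (1-l) • v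
  have hsmul : Matrix.vecMul v ((1 - l) • A⁻¹) = (1 - l) • Matrix.vecMul v A⁻¹ := by
    funext j
    simp only [Matrix.vecMul, dotProduct, Matrix.smul_apply, Pi.smul_apply, smul_eq_mul,
      Finset.mul_sum]
    exact Finset.sum_congr rfl fun k _ => by ring
  have hπA : Matrix.vecMul π A = (1 - l) • v := by
    rw [hπ, hsmul, ← Matrix.smul_vecMul, Matrix.vecMul_vecMul,
      Matrix.nonsing_inv_mul A hunit, Matrix.vecMul_one]
  -- fixed point equation
  have hfix : ∀ j, π j = l * (Matrix.vecMul π P) j + (1 - l) * v j := by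
    intro j
    have h := congrFun hπA j
    rw [hA] at h
    rw [Matrix.vecMul_sub, Matrix.vecMul_one] at h
    have hs : (Matrix.vecMul π (l • P)) j = l * (Matrix.vecMul π P) j := by
      simp only [Matrix.vecMul, dotProduct, Matrix.smul_apply, smul_eq_mul, Finset.mul_sum]
      exact Finset.sum_congr rfl fun k _ => by ring
    simp only [Pi.sub_apply, Pi.smul_apply, smul_eq_mul] at h
    rw [hs] at h
    linarith
  -- sum of vecMul x P equals sum of x
  have hsumP : ∀ x : Fin n → ℝ, ∑ j, (Matrix.vecMul x P) j = ∑ i, x i := by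
    intro x
    simp only [Matrix.vecMul, dotProduct]
    rw [Finset.sum_comm]
    refine Finset.sum_congr rfl fun i _ => ?_
    rw [← Finset.mul_sum, hrow i, mul_one]
  -- sum π = 1
  have hsum : ∑ i, π i = 1 := by
    have h := Finset.sum_congr rfl (fun j (_ : j ∈ Finset.univ) => hfix j)
    rw [Finset.sum_add_distrib, ← Finset.mul_sum, ← Finset.mul_sum, hsumP, hv1] at h
    nlinarith [h]
  -- πG = π
  have hfixed : Matrix.vecMul π G = π := by
    funext j
    have : (Matrix.vecMul π G) j = l * (Matrix.vecMul π P) j + (1 - l) * (∑ i, π i) * v j := by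
      simp only [Matrix.vecMul, dotProduct, hG, Finset.mul_sum, Finset.sum_mul,
        ← Finset.sum_add_distrib]
      exact Finset.sum_congr rfl fun x _ => by ring
    rw [this, hsum, mul_one, ← hfix j]
  refine ⟨⟨hfixed, hsum⟩, ?_, ?_⟩
  · -- uniqueness
    intro π' hπ'G hπ'sum
    have hfix' : ∀ j, π' j = l * (Matrix.vecMul π' P) j + (1 - l) * v j := by
      intro j
      have h : (Matrix.vecMul π' G) j = l * (Matrix.vecMul π' P) j + (1 - l) * (∑ i, π' i) * v j := by
        simp only [Matrix.vecMul, dotProduct, hG, Finset.mul_sum, Finset.sum_mul,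
          ← Finset.sum_add_distrib]
        exact Finset.sum_congr rfl fun x _ => by ring
      rw [hπ'G] at h
      rw [h, hπ'sum, mul_one]
    have hπ'A : Matrix.vecMul π' A = (1 - l) • v := by
      funext j
      rw [hA, Matrix.vecMul_sub, Matrix.vecMul_one]
      have hs : (Matrix.vecMul π' (l • P)) j = l * (Matrix.vecMul π' P) j := by
        simp only [Matrix.vecMul, dotProduct, Matrix.smul_apply, smul_eq_mul, Finset.mul_sum]
        exact Finset.sum_congr rfl fun k _ => by ring
      simp only [Pi.sub_apply, Pi.smul_apply, smul_eq_mul]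
      rw [hs]
      have := hfix' j
      linarith
    have : Matrix.vecMul π' (A * A⁻¹) = Matrix.vecMul π (A * A⁻¹) := by
      rw [← Matrix.vecMul_vecMul, ← Matrix.vecMul_vecMul, hπ'A, hπA]
    rwa [Matrix.mul_nonsing_inv A hunit, Matrix.vecMul_one, Matrix.vecMul_one] at this
  · -- positivity
    intro hvpos i
    -- powers of P are nonneg with row sums 1
    have hPpow_nonneg : ∀ N : ℕ, ∀ i j, 0 ≤ (P ^ N) i j := by
      intro N
      induction N with
      | zero => intro i j; by_cases h : i = j <;> simp [Matrix.one_apply, h]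
      | succ N ih =>
        intro i j
        rw [pow_succ, Matrix.mul_apply]
        exact Finset.sum_nonneg fun k _ => mul_nonneg (ih i k) (hnonneg k j)
    have hPpow_row : ∀ N : ℕ, ∀ i, ∑ j, (P ^ N) i j = 1 := by
      intro N
      induction N with
      | zero => intro i; simp [Matrix.one_apply]
      | succ N ih =>
        intro i
        simp only [pow_succ, Matrix.mul_apply]
        rw [Finset.sum_comm]
        calc ∑ k, ∑ j, (P ^ N) i k * P k j = ∑ k, (P ^ N) i k * ∑ j, P k j := by
              simp [Finset.mul_sum]
          _ = 1 := by simp [hrow, ih i]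
    have hPpow_le_one : ∀ N : ℕ, ∀ i j, (P ^ N) i j ≤ 1 := by
      intro N i j
      have := Finset.single_le_sum (f := fun j => (P ^ N) i j)
        (fun j _ => hPpow_nonneg N i j) (Finset.mem_univ j)
      rw [hPpow_row N i] at this
      linarith [this]
    set C : ℝ := ∑ i, |π i| with hC
    have hbound : ∀ N : ℕ, ∀ j, |(Matrix.vecMul π (P ^ N)) j| ≤ C := by
      intro N j
      simp only [Matrix.vecMul, dotProduct]
      calc |∑ i, π i * (P ^ N) i j| ≤ ∑ i, |π i * (P ^ N) i j| := Finset.abs_sum_le_sum_abs _ _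
        _ ≤ ∑ i, |π i| := by
            refine Finset.sum_le_sum fun i _ => ?_
            rw [abs_mul, abs_of_nonneg (hPpow_nonneg N i j)]
            exact mul_le_of_le_one_right (abs_nonneg _) (hPpow_le_one N i j)
    -- iterated expansion
    have hiter : ∀ N : ℕ, ∀ j, π j =
        (∑ k ∈ Finset.range N, (1 - l) * l ^ k * (Matrix.vecMul v (P ^ k)) j)
          + l ^ N * (Matrix.vecMul π (P ^ N)) j := by
      intro N
      induction N with
      | zero => intro j; simp [Matrix.vecMul_one]
      | succ N ih =>
        intro j
        rw [Finset.sum_range_succ]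
        have h1 : Matrix.vecMul π (P ^ (N + 1)) = Matrix.vecMul (Matrix.vecMul π P) (P ^ N) := by
          rw [Matrix.vecMul_vecMul, ← pow_succ']
        have h2 : (Matrix.vecMul (Matrix.vecMul π P) (P ^ N)) j
            = (1 / l) * ((Matrix.vecMul π (P ^ N)) j - (1 - l) * (Matrix.vecMul v (P ^ N)) j) := by
          have hπeq : Matrix.vecMul π P = (1/l) • (π - (1 - l) • v) := by
            funext m
            have := hfix m
            simp only [Pi.smul_apply, Pi.sub_apply, smul_eq_mul]
            field_simp
            linarith
          rw [hπeq, Matrix.smul_vecMul, Matrix.sub_vecMul, Matrix.smul_vecMul]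
          simp only [Pi.smul_apply, Pi.sub_apply, smul_eq_mul]
        rw [h1, h2, ih j]
        have hl0' : l ≠ 0 := ne_of_gt hl0
        field_simp
        ring
    -- lower bound π j ≥ (1-l) v j - C * l^N
    have hlow : ∀ N : ℕ, (1 - l) * v i - C * l ^ N ≤ π i := by
      intro N
      have h := hiter (N + 1) i
      have hsumterm : (1 - l) * v i ≤
          ∑ k ∈ Finset.range (N + 1), (1 - l) * l ^ k * (Matrix.vecMul v (P ^ k)) i := by
        have h0 : (1 - l) * l ^ 0 * (Matrix.vecMul v (P ^ 0)) i = (1 - l) * v i := by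
          simp [Matrix.vecMul_one]
        rw [← h0]
        apply Finset.single_le_sum (f := fun k => (1 - l) * l ^ k * (Matrix.vecMul v (P ^ k)) i)
          _ (Finset.mem_range.mpr (Nat.succ_pos N))
        intro k _
        apply mul_nonneg (mul_nonneg (by linarith) (pow_nonneg hl0.le k))
        simp only [Matrix.vecMul, dotProduct]
        exact Finset.sum_nonneg fun m _ => mul_nonneg (hv m) (hPpow_nonneg k m i)
      have hrem : -(C * l ^ (N + 1)) ≤ l ^ (N + 1) * (Matrix.vecMul π (P ^ (N + 1))) i := by
        have := hbound (N + 1) i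
        have habs := neg_abs_le ((Matrix.vecMul π (P ^ (N + 1))) i)
        have hlp : (0:ℝ) ≤ l ^ (N + 1) := pow_nonneg hl0.le _
        nlinarith [abs_nonneg ((Matrix.vecMul π (P ^ (N + 1))) i)]
      have hstep : C * l ^ (N + 1) ≤ C * l ^ N := by
        have hC0 : 0 ≤ C := Finset.sum_nonneg fun i _ => abs_nonneg _
        have : l ^ (N + 1) ≤ l ^ N := by
          exact pow_le_pow_of_le_one hl0.le hl1.le (Nat.le_succ N)
        nlinarith
      linarith [h, hsumterm, hrem]
    -- take limit
    have hlim : Filter.Tendsto (fun N : ℕ => (1 - l) * v i - C * l ^ N) Filter.atTop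
        (nhds ((1 - l) * v i)) := by
      have h1 : Filter.Tendsto (fun N : ℕ => l ^ N) Filter.atTop (nhds 0) :=
        tendsto_pow_atTop_nhds_zero_of_lt_one hl0.le hl1
      have := h1.const_mul C
      have h2 := Filter.Tendsto.const_sub ((1 - l) * v i) (this)
      simpa using h2
    have hge : (1 - l) * v i ≤ π i := le_of_tendsto' hlim hlow
    have := hvpos i
    nlinarith
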